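/- Let X be a finite nonempty set, P a probability distribution on X, p ∈ (0,1], and Y a top-p set of P (so P(Y) ≥ p and every element of Y has P-probability at least that of every element outside Y). Among all subsets Z ⊆ X with |Z| ≤ |Y|, the set Y maximizes P(Z); consequently, the top-p distribution Q of P (defined by Q(x) = P(x)/P(Y) for x ∈ Y and 0 otherwise) achieves total variation distance δ(P,Q) = 1 − P(Y) ≤ 1 − P(Z) for every Z with |Z| ≤ |Y| and its renormalized restriction. -/
import Mathlib


/-- Let `P` be a probability distribution on a finite nonempty set `X`,
`p ∈ (0,1]`, and `Y` a top-`p` set of `P` (so `P(Y) ≥ p` and every element of `Y` has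
`P`-probability at least that of every element outside `Y`). Then among all subsets `Z` with
`|Z| ≤ |Y|`, the set `Y` maximizes `P(Z)`; consequently, the top-`p` distribution `Q` of `P`
(`Q(x) = P(x)/P(Y)` for `x ∈ Y`, else `0`) achieves total variation distance
`δ(P,Q) = 1 − P(Y) ≤ 1 − P(Z)` for every `Z` with `|Z| ≤ |Y|`, and
`δ(P,Q) ≤ δ(P, R_Z)` for the renormalized restriction `R_Z` of `P` to any such `Z` with
`P(Z) > 0`. -/
theorem top_p_set_optimal
    {X : Type*} [Fintype X] [Nonempty X] [DecidableEq X]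
    (P : X → ℝ) (hP0 : ∀ x, 0 ≤ P x) (hP1 : ∑ x, P x = 1)
    (p : ℝ) (hp0 : 0 < p) (hp1 : p ≤ 1)
    (Y : Finset X) (hYp : p ≤ ∑ x ∈ Y, P x)
    (hYtop : ∀ x ∈ Y, ∀ x' ∉ Y, P x' ≤ P x)
    (Q : X → ℝ)
    (hQ : ∀ x, Q x = if x ∈ Y then P x / (∑ y ∈ Y, P y) else 0) :
    (∀ Z : Finset X, Z.card ≤ Y.card → ∑ x ∈ Z, P x ≤ ∑ x ∈ Y, P x) ∧
    ((1 / 2) * ∑ x, |P x - Q x| = 1 - ∑ x ∈ Y, P x) ∧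
    (∀ Z : Finset X, Z.card ≤ Y.card →
      (1 / 2) * ∑ x, |P x - Q x| ≤ 1 - ∑ x ∈ Z, P x) ∧
    (∀ Z : Finset X, Z.card ≤ Y.card → 0 < ∑ x ∈ Z, P x →
      (1 / 2) * ∑ x, |P x - Q x| ≤
        (1 / 2) * ∑ x, |P x - (if x ∈ Z then P x / (∑ z ∈ Z, P z) else 0)|) := by
  have hS0 : 0 < ∑ x ∈ Y, P x := lt_of_lt_of_le hp0 hYp
  have hsub : ∀ W : Finset X, ∑ x ∈ W, P x ≤ 1 := by
    intro W
    rw [← hP1]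
    exact Finset.sum_le_sum_of_subset_of_nonneg (Finset.subset_univ W) (fun i _ _ => hP0 i)
  have tv : ∀ W : Finset X, 0 < ∑ x ∈ W, P x →
      ∑ x, |P x - (if x ∈ W then P x / (∑ z ∈ W, P z) else 0)| = 2 * (1 - ∑ x ∈ W, P x) := by
    intro W hW
    have hT1 : ∑ x ∈ W, P x ≤ 1 := hsub W
    have hcompl : ∑ x ∈ Wᶜ, P x = 1 - ∑ x ∈ W, P x := by
      have h := Finset.sum_add_sum_compl W P
      linarith [hP1 ▸ h]
    rw [← Finset.sum_add_sum_compl W]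
    have h1 : ∑ x ∈ W, |P x - (if x ∈ W then P x / (∑ z ∈ W, P z) else 0)|
        = 1 - ∑ x ∈ W, P x := by
      have he : ∀ x ∈ W, |P x - (if x ∈ W then P x / (∑ z ∈ W, P z) else 0)|
          = P x / (∑ z ∈ W, P z) - P x := by
        intro x hx
        rw [if_pos hx, abs_of_nonpos]
        · ring
        · have h1x : P x ≤ P x / (∑ z ∈ W, P z) := by
            rw [le_div_iff₀ hW]
            nlinarith [hP0 x]
          linarith
      rw [Finset.sum_congr rfl he, Finset.sum_sub_distrib, ← Finset.sum_div]
      field_simp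
    have h2 : ∑ x ∈ Wᶜ, |P x - (if x ∈ W then P x / (∑ z ∈ W, P z) else 0)|
        = 1 - ∑ x ∈ W, P x := by
      have he : ∀ x ∈ Wᶜ, |P x - (if x ∈ W then P x / (∑ z ∈ W, P z) else 0)| = P x := by
        intro x hx
        rw [if_neg (Finset.mem_compl.mp hx), sub_zero, abs_of_nonneg (hP0 x)]
      rw [Finset.sum_congr rfl he, hcompl]
    rw [h1, h2]; ring
  have part1 : ∀ Z : Finset X, Z.card ≤ Y.card → ∑ x ∈ Z, P x ≤ ∑ x ∈ Y, P x := by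
    intro Z hZ
    have hYne : Y.Nonempty := by
      by_contra h
      rw [Finset.not_nonempty_iff_eq_empty] at h
      rw [h, Finset.sum_empty] at hS0
      exact lt_irrefl 0 hS0
    obtain ⟨y0, hy0, hby0⟩ := Finset.exists_mem_eq_inf' hYne P
    have hb0 : 0 ≤ Y.inf' hYne P := hby0 ▸ hP0 y0
    have hcard : (Z \ Y).card ≤ (Y \ Z).card := by
      have h1 := Finset.card_sdiff_add_card_inter Z Y
      have h2 := Finset.card_sdiff_add_card_inter Y Z
      rw [Finset.inter_comm] at h2
      omega
    have hZY : ∑ x ∈ Z \ Y, P x ≤ (Z \ Y).card • Y.inf' hYne P := by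
      apply Finset.sum_le_card_nsmul
      intro x hx
      rw [hby0]
      exact hYtop y0 hy0 x (Finset.mem_sdiff.mp hx).2
    have hYZ : (Y \ Z).card • Y.inf' hYne P ≤ ∑ x ∈ Y \ Z, P x := by
      apply Finset.card_nsmul_le_sum
      intro x hx
      exact Finset.inf'_le P (Finset.mem_sdiff.mp hx).1
    have hmid : ((Z \ Y).card : ℝ) • Y.inf' hYne P ≤ ((Y \ Z).card : ℝ) • Y.inf' hYne P := by
      apply smul_le_smul_of_nonneg_right _ hb0
      exact_mod_cast hcard
    have hZsplit := Finset.sum_inter_add_sum_sdiff Z Y P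
    have hYsplit := Finset.sum_inter_add_sum_sdiff Y Z P
    rw [Finset.inter_comm] at hYsplit
    have hsdiff : ∑ x ∈ Z \ Y, P x ≤ ∑ x ∈ Y \ Z, P x := by
      calc ∑ x ∈ Z \ Y, P x ≤ (Z \ Y).card • Y.inf' hYne P := hZY
        _ = ((Z \ Y).card : ℝ) • Y.inf' hYne P := by rw [nsmul_eq_mul, smul_eq_mul]
        _ ≤ ((Y \ Z).card : ℝ) • Y.inf' hYne P := hmid
        _ = (Y \ Z).card • Y.inf' hYne P := by rw [nsmul_eq_mul, smul_eq_mul]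
        _ ≤ ∑ x ∈ Y \ Z, P x := hYZ
    linarith
  have hQeq : ∀ x, |P x - Q x| = |P x - (if x ∈ Y then P x / (∑ z ∈ Y, P z) else 0)| := by
    intro x; rw [hQ x]
  have part2 : (1 / 2) * ∑ x, |P x - Q x| = 1 - ∑ x ∈ Y, P x := by
    rw [Finset.sum_congr rfl (fun x _ => hQeq x), tv Y hS0]; ring
  refine ⟨part1, part2, ?_, ?_⟩
  · intro Z hZ
    rw [part2]
    linarith [part1 Z hZ]
  · intro Z hZ hZ0
    rw [part2, tv Z hZ0]
    have := part1 Z hZ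
    linarith
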